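/- Consider the update dynamics on states over a finite acyclic argumentation framework: from a state S (assigning Booleans to a_x for x in a fixed present set P ⊆ A, with attack relation R acyclic), a step either sets a_x to false when there exist x,y ∈ P with a_x, a_y true and (y,x) ∈ R, or sets a_x to true when x ∈ P, a_x is false, and every attacker y ∈ P of x has a_y false. Then every sequence of such update steps from any initial state terminates in finitely many steps in a state where no step is applicable; equivalently, there is no infinite sequence of applicable update steps. (Hint: each terminal state is the restriction of the unique acceptability labelling and the dynamics has a well-founded measure derived from the acyclic attack order.) -/

import Mathlib

/-- An update step of the acceptability-update dynamics on states `A → Bool`,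
over present set `P` and acyclic attack relation `R`.  Either `makesUnacc_{y,x}`
(set `a_x := false` when `a_x`, `a_y` hold and `(y,x) ∈ R`, with the priority
that the attacker `y` must not itself be the target of an applicable
`makesUnacc`), or `makesAcc_x` (set `a_x := true` when `a_x` is false and all
present attackers of `x` are labelled false). -/
def UpdateStep {A : Type*} [DecidableEq A] (P : A → Prop) (R : A → A → Prop)
    (s s' : A → Bool) : Prop :=
  (∃ x y : A, P x ∧ P y ∧ s x = true ∧ s y = true ∧ R y x ∧
      (∀ z : A, P z → R z y → s z = false) ∧
      s' = Function.update s x false) ∨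
  (∃ x : A, P x ∧ s x = false ∧ (∀ y : A, P y → R y x → s y = false) ∧
      s' = Function.update s x true)

/-- Termination of the update dynamics: over a finite set with an acyclic attack
relation, there is no infinite sequence of applicable update steps. -/
theorem update_dynamics_terminates
    {A : Type*} [Fintype A] [DecidableEq A]
    (P : A → Prop) (R : A → A → Prop)
    (hacyc : ∀ x : A, ¬ Relation.TransGen R x x) :
    ¬ ∃ f : ℕ → (A → Bool), ∀ n : ℕ, UpdateStep P R (f n) (f (n + 1)) := by
  classical
  rintro ⟨f, hf⟩
  -- every step changes some coordinate
  have hchange : ∀ n, ∃ x, f (n + 1) x ≠ f n x := by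
    intro n
    rcases hf n with ⟨x, y, _, _, hx, _, _, _, hupd⟩ | ⟨x, _, hx, _, hupd⟩
    · exact ⟨x, by simp [hupd, hx]⟩
    · exact ⟨x, by simp [hupd, hx]⟩
  choose g hg using hchange
  -- set of arguments changing infinitely often
  set I : Set A := {x | ∀ N, ∃ n, N ≤ n ∧ f (n + 1) x ≠ f n x} with hIdef
  have hne : I.Nonempty := by
    obtain ⟨x, hx⟩ := Finite.exists_infinite_fiber g
    refine ⟨x, fun N => ?_⟩
    have hinf : (g ⁻¹' {x}).Infinite := Set.infinite_coe_iff.mp hx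
    obtain ⟨n, hn, hn2⟩ := hinf.exists_gt N
    have : g n = x := hn
    exact ⟨n, hn2.le, this ▸ hg n⟩
  -- R is well-founded
  haveI : IsTrans A (Relation.TransGen R) := ⟨fun _ _ _ => Relation.TransGen.trans⟩
  haveI : IsIrrefl A (Relation.TransGen R) := ⟨hacyc⟩
  have hwfT : WellFounded (Relation.TransGen R) :=
    Finite.wellFounded_of_trans_of_irrefl _
  have hwfR : WellFounded R :=
    Subrelation.wf (fun h => Relation.TransGen.single h) hwfT
  set x := hwfR.min I hne with hxdef
  have hxI : x ∈ I := hwfR.min_mem I hne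
  -- eventual constancy from "not infinitely changing"
  have const : ∀ (y : A) (N : ℕ), (∀ n, N ≤ n → f (n + 1) y = f n y) →
      ∀ n, N ≤ n → f n y = f N y := by
    intro y N h n hn
    induction n with
    | zero => have : N = 0 := Nat.le_zero.mp hn; rw [this]
    | succ k ih =>
      rcases Nat.lt_or_ge k N with hk | hk
      · have : N = k + 1 := le_antisymm hn hk
        rw [this]
      · rw [h k hk, ih hk]
  -- every attacker of x is eventually constant
  have hstab : ∀ y : A, ∃ N, ∀ n, N ≤ n → (R y x → P y → f n y = f N y) := by
    intro y
    by_cases hy : R y x ∧ P y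
    · have hyI : y ∉ I := fun h => hwfR.not_lt_min I h hy.1
      have hyI' : ¬ ∀ N, ∃ n, N ≤ n ∧ f (n + 1) y ≠ f n y := hyI
      push_neg at hyI'
      obtain ⟨N, hN⟩ := hyI'
      have hN' : ∀ n, N ≤ n → f (n + 1) y = f n y := by
        intro n hn
        exact hN n hn
      exact ⟨N, fun n hn _ _ => const y N hN' n hn⟩
    · exact ⟨0, fun n _ hR hP => absurd ⟨hR, hP⟩ hy⟩
  choose Nf hNf using hstab
  set N := Finset.univ.sup Nf with hNdef
  have hNle : ∀ y : A, Nf y ≤ N := fun y => Finset.le_sup (Finset.mem_univ y)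
  have hstable : ∀ n, N ≤ n → ∀ y, P y → R y x → f n y = f N y := by
    intro n hn y hP hR
    rw [hNf y n (le_trans (hNle y) hn) hR hP, hNf y N (hNle y) hR hP]
  -- if after time N every change of x results in the value b, contradiction
  have absorb : ∀ b : Bool,
      (∀ n, N ≤ n → f (n + 1) x ≠ f n x → f (n + 1) x = b) → False := by
    intro b hb
    obtain ⟨n₁, hn₁, hc₁⟩ := hxI N
    have h1 : f (n₁ + 1) x = b := hb n₁ hn₁ hc₁
    have hconst : ∀ m, n₁ + 1 ≤ m → f m x = b := by
      intro m hm
      induction m with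
      | zero => omega
      | succ k ih =>
        rcases Nat.lt_or_ge k (n₁ + 1) with hk | hk
        · have hk' : k = n₁ := by omega
          rw [hk']; exact h1
        · by_cases hch : f (k + 1) x = f k x
          · rw [hch]; exact ih hk
          · exact hb k (by omega) hch
    obtain ⟨n₂, hn₂, hc₂⟩ := hxI (n₁ + 1)
    exact hc₂ (by rw [hconst n₂ hn₂, hconst (n₂ + 1) (by omega)])
  by_cases hall : ∀ y, P y → R y x → f N y = false
  · -- all attackers eventually false: x can only change to true
    refine absorb true ?_
    intro n hn hch
    rcases hf n with ⟨x', y', hPx', hPy', hx', hy', hR', hpri', hupd⟩ |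
      ⟨x', hPx', hx', hguard, hupd⟩
    · by_cases hxx : x' = x
      · subst hxx
        have h1 := hstable n hn y' hPy' hR'
        rw [hall y' hPy' hR'] at h1
        rw [h1] at hy'; exact absurd hy' (by simp)
      · have hno : f (n + 1) x = f n x := by
          rw [hupd]; exact Function.update_of_ne (fun h => hxx h.symm) _ _
        exact absurd hno hch
    · by_cases hxx : x' = x
      · subst hxx; rw [hupd]; simp
      · have hno : f (n + 1) x = f n x := by
          rw [hupd]; exact Function.update_of_ne (fun h => hxx h.symm) _ _
        exact absurd hno hch
  · -- some attacker eventually true: x can only change to false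
    push_neg at hall
    obtain ⟨y, hPy, hRy, hyT⟩ := hall
    have hyT' : f N y = true := by
      cases h : f N y with
      | false => exact absurd h hyT
      | true => rfl
    refine absorb false ?_
    intro n hn hch
    rcases hf n with ⟨x', y', hPx', hPy', hx', hy', hR', hpri', hupd⟩ |
      ⟨x', hPx', hx', hguard, hupd⟩
    · by_cases hxx : x' = x
      · subst hxx; rw [hupd]; simp
      · have hno : f (n + 1) x = f n x := by
          rw [hupd]; exact Function.update_of_ne (fun h => hxx h.symm) _ _
        exact absurd hno hch
    · by_cases hxx : x' = x
      · subst hxx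
        have h1 := hguard y hPy hRy
        rw [hstable n hn y hPy hRy, hyT'] at h1
        exact absurd h1 (by simp)
      · have hno : f (n + 1) x = f n x := by
          rw [hupd]; exact Function.update_of_ne (fun h => hxx h.symm) _ _
        exact absurd hno hch
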